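/- The modified cross-entropy update satisfies the no-gravity-well condition: if A is a finite type with |A| ≥ 2, a* ∈ A, u ≥ 0, and θ' is the MCE update of θ : A → ℝ with step u at a*, then the distinguished action receives the maximal policy increment, i.e. for every a ∈ A, softmax θ' (a*) − softmax θ (a*) ≥ softmax θ' (a) − softmax θ (a). -/

import Mathlib

noncomputable def softmax {A : Type*} [Fintype A] (θ : A → ℝ) (a : A) : ℝ :=
  Real.exp (θ a) / ∑ b, Real.exp (θ b)

lemma softmax_shift {A : Type*} [Fintype A] (θ : A → ℝ) (c : ℝ) (a : A) :
    softmax (fun b => θ b + c) a = softmax θ a := by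
  simp only [softmax, Real.exp_add, ← Finset.sum_mul]
  rw [mul_div_mul_right _ _ (Real.exp_ne_zero c)]

/-- The modified cross-entropy update satisfies the no-gravity-well condition: the
distinguished action receives the maximal policy increment. -/
theorem mce_no_gravity_well {A : Type*} [Fintype A] [DecidableEq A]
    (hA : 2 ≤ Fintype.card A) (astar : A) (u : ℝ) (hu : 0 ≤ u)
    (θ θ' : A → ℝ)
    (hstar : θ' astar = θ astar + u)
    (hother : ∀ a, a ≠ astar → θ' a = θ a - u / ((Fintype.card A : ℝ) - 1)) :
    ∀ a, softmax θ' a - softmax θ a ≤ softmax θ' astar - softmax θ astar := by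
  set c : ℝ := u / ((Fintype.card A : ℝ) - 1) with hc
  have hcard : (1 : ℝ) ≤ (Fintype.card A : ℝ) - 1 := by
    have : (2 : ℝ) ≤ (Fintype.card A : ℝ) := by exact_mod_cast hA
    linarith
  have hc0 : 0 ≤ c := div_nonneg hu (by linarith)
  set v : ℝ := u + c with hv
  have hv0 : 0 ≤ v := by positivity
  set φ : A → ℝ := fun a => if a = astar then θ astar + v else θ a with hφ
  have hθ' : θ' = fun b => φ b + (-c) := by
    funext b
    by_cases hb : b = astar
    · subst hb; simp [hφ, hstar, hv]; ring
    · simp [hφ, hb, hother b hb]; ring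
  have hsm : ∀ a, softmax θ' a = softmax φ a := by
    intro a; rw [hθ', softmax_shift]
  -- sums
  set S : ℝ := ∑ b, Real.exp (θ b) with hS
  have hSpos : 0 < S := Finset.sum_pos (fun b _ => Real.exp_pos _) ⟨astar, Finset.mem_univ _⟩
  have hsplit : S = Real.exp (θ astar) + ∑ b ∈ Finset.univ.erase astar, Real.exp (θ b) := by
    rw [hS, ← Finset.add_sum_erase _ _ (Finset.mem_univ astar)]
  set R : ℝ := ∑ b ∈ Finset.univ.erase astar, Real.exp (θ b) with hR
  have hRpos : 0 ≤ R := Finset.sum_nonneg fun b _ => (Real.exp_pos _).le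
  have hS' : (∑ b, Real.exp (φ b)) = Real.exp (θ astar + v) + R := by
    rw [← Finset.add_sum_erase _ _ (Finset.mem_univ astar)]
    simp only [hφ, if_pos rfl]
    congr 1
    apply Finset.sum_congr rfl
    intro b hb
    rw [if_neg (Finset.ne_of_mem_erase hb)]
  have hS'pos : 0 < Real.exp (θ astar + v) + R := by positivity
  have hle : Real.exp (θ astar) ≤ Real.exp (θ astar + v) :=
    Real.exp_le_exp.mpr (by linarith)
  have hstar_ge : softmax θ astar ≤ softmax φ astar := by
    simp only [softmax, hφ, if_pos rfl, hS', ← hS, hsplit]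
    rw [show (∑ x, Real.exp (if x = astar then θ astar + v else θ x)) = Real.exp (θ astar + v) + R from hS']
    rw [div_le_div_iff₀ (by linarith [Real.exp_pos (θ astar)]) hS'pos]
    nlinarith [Real.exp_pos (θ astar), Real.exp_pos (θ astar + v)]
  intro a
  rw [hsm, hsm]
  by_cases ha : a = astar
  · subst ha; exact le_refl _
  · have hle2 : softmax φ a ≤ softmax θ a := by
      simp only [softmax, hφ, if_neg ha, hS', ← hS]
      apply div_le_div_of_nonneg_left (Real.exp_pos _).le hSpos
      rw [hsplit]; linarith
    linarith
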